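/- Let E_1 be the two-dimensional complex evolution algebra with structural matrix ((1,0),(0,0)) (i.e. e₁e₁ = e₁, e₂e₂ = 0). A linear map P : ℂ² → ℂ² is a Rota–Baxter operator of weight 1 on E_1 if and only if there exists d ∈ ℂ such that P has matrix ((−1,0),(0,d)) or matrix ((0,0),(0,d)), i.e. P(e₂) = d e₂ and P(e₁) = −e₁ or P(e₁) = 0. -/
import Mathlib


/-- The evolution-algebra product on `ℂ²` determined by a structural matrix `A`:
`e_i · e_i = a_{i1} e₁ + a_{i2} e₂` and `e₁ · e₂ = e₂ · e₁ = 0`. -/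
noncomputable def evMulC (A : Matrix (Fin 2) (Fin 2) ℂ) (x y : Fin 2 → ℂ) : Fin 2 → ℂ :=
  fun k => x 0 * y 0 * A 0 k + x 1 * y 1 * A 1 k

/-- `P` is a Rota–Baxter operator of weight `lam` on the evolution algebra with structural
matrix `A`: `P(x)·P(y) = P(x·P(y) + P(x)·y + lam x·y)` for all `x, y`. -/
def IsRotaBaxter (A : Matrix (Fin 2) (Fin 2) ℂ) (lam : ℂ)
    (P : (Fin 2 → ℂ) →ₗ[ℂ] (Fin 2 → ℂ)) : Prop :=
  ∀ x y : Fin 2 → ℂ,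
    evMulC A (P x) (P y) = P (evMulC A x (P y) + evMulC A (P x) y + lam • evMulC A x y)

lemma decomp (P : (Fin 2 → ℂ) →ₗ[ℂ] (Fin 2 → ℂ)) (z : Fin 2 → ℂ) :
    P z = z 0 • P ![1, 0] + z 1 • P ![0, 1] := by
  rw [← map_smul, ← map_smul, ← map_add]
  congr 1
  funext i
  fin_cases i <;> simp

/-- Rota–Baxter operators of weight 1 on `E₁` (`e₁e₁ = e₁`) are exactly those
with matrix `((-1,0),(0,d))` or `((0,0),(0,d))`. -/
theorem rb_weight1_E1 (P : (Fin 2 → ℂ) →ₗ[ℂ] (Fin 2 → ℂ)) :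
    IsRotaBaxter !![1, 0; 0, 0] 1 P ↔
      ∃ d : ℂ, (P ![1, 0] = ![-1, 0] ∨ P ![1, 0] = ![0, 0]) ∧ P ![0, 1] = ![0, d] := by
  constructor
  · intro hRB
    set u := P ![1, 0] with hu
    set v := P ![0, 1] with hv
    have h11 := hRB ![1, 0] ![1, 0]
    have h22 := hRB ![0, 1] ![0, 1]
    rw [decomp P (_ + _ + _)] at h11 h22
    have e110 := congrFun h11 0
    have e111 := congrFun h11 1
    have e220 := congrFun h22 0
    simp [evMulC, hu, hv] at e110 e111 e220
    clear h11 h22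
    have hb : u 1 = 0 := by
      rcases e111 with h | h
      · rcases e110 with h0 | h0
        · exact absurd (show (1:ℂ) = 0 by linear_combination -h - 2*h0) one_ne_zero
        · exact absurd (show (1:ℂ) = 0 by linear_combination h - 2*h0) one_ne_zero
      · exact h
    have ha : u 0 = -1 ∨ u 0 = 0 := by
      rcases e110 with h | h
      · left; linear_combination -h
      · right; exact h
    refine ⟨v 1, ?_, ?_⟩
    · rcases ha with h | h
      · left; funext i; fin_cases i <;> simp [h, hb]
      · right; funext i; fin_cases i <;> simp [h, hb]
    · funext i; fin_cases i
      · simpa using e220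
      · simp
  · rintro ⟨d, h1, h2⟩
    intro x y
    rw [decomp P x, decomp P y, h2, decomp P (_ + _ + _), h2]
    rcases h1 with h1 | h1 <;> rw [h1] <;> funext k <;> fin_cases k <;>
      simp [evMulC]
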